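/- (Lemma 1) Suppose y_1,…,y_n are independent random variables with E y_i = γ'(x_{i·}ᵀ β°) for a convex differentiable γ: ℝ → ℝ, and the centered responses ε_i = y_i − E y_i are σ-subgaussian, i.e. E exp(u ε_i) ≤ exp(σ² u² / 2) for all u ∈ ℝ. Let a ∈ (0,1), λ > 0, and let β̂ be a (measurable) random vector that almost surely minimizes β ↦ ℓ(β) + λ Σ_{k=1}^r ‖W_k β_k‖ over ℝ^p, where ℓ(β) = Σ_{i=1}^n [γ(x_{i·}ᵀβ) − y_i x_{i·}ᵀβ]. Assume ζ_{a,W} > 0. Then P( |β̂ − β°|_∞ > (1 + a) λ ζ_{a,W}^{-1} ) ≤ 2 p exp( − a² λ² / (2 σ² x_W²) ). -/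

import Mathlib

open MeasureTheory ProbabilityTheory
open scoped BigOperators ENNReal Classical

/-- The group norm `‖W_k β_k‖`. -/
noncomputable def groupNorm {r : ℕ} {p : Fin r → ℕ}
    (w β : ((k : Fin r) × Fin (p k)) → ℝ) (k : Fin r) : ℝ :=
  Real.sqrt (∑ j : Fin (p k), (w ⟨k, j⟩ * β ⟨k, j⟩) ^ 2)

/-- The sup norm `|v|_∞`. -/
noncomputable def supNorm {ι : Type*} [Fintype ι] (v : ι → ℝ) : ℝ := ⨆ c, |v c|

/-- The inner product `x_{i·}ᵀ β` of the `i`-th row of the design `X` with `β`. -/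
def dotRow {n r : ℕ} {p : Fin r → ℕ}
    (X : Fin n → ((k : Fin r) × Fin (p k)) → ℝ) (i : Fin n)
    (β : ((k : Fin r) × Fin (p k)) → ℝ) : ℝ :=
  ∑ c, X i c * β c

/-- The Euclidean norm `‖x_{j,k}‖` of column `c = (j,k)` of `X`. -/
noncomputable def colNorm {n r : ℕ} {p : Fin r → ℕ}
    (X : Fin n → ((k : Fin r) × Fin (p k)) → ℝ) (c : (k : Fin r) × Fin (p k)) : ℝ :=
  Real.sqrt (∑ i, (X i c) ^ 2)

/-- `x_W = max_{j,k} ‖x_{j,k}‖ / w_{j,k}`. -/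
noncomputable def xW {n r : ℕ} {p : Fin r → ℕ}
    (X : Fin n → ((k : Fin r) × Fin (p k)) → ℝ)
    (w : ((k : Fin r) × Fin (p k)) → ℝ) : ℝ :=
  ⨆ c, colNorm X c / w c

/-- The negative log-likelihood loss `ℓ(β) = ∑_i [γ(x_{i·}ᵀβ) − y_i x_{i·}ᵀβ]`
(at sample point `ω`). -/
noncomputable def loss {Ω : Type*} {n r : ℕ} {p : Fin r → ℕ}
    (X : Fin n → ((k : Fin r) × Fin (p k)) → ℝ) (γ : ℝ → ℝ)
    (y : Fin n → Ω → ℝ) (ω : Ω) (β : ((k : Fin r) × Fin (p k)) → ℝ) : ℝ :=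
  ∑ i, (γ (dotRow X i β) - y i ω * dotRow X i β)

/-- Coordinate `c` of `∇ℓ(β° + ν) − ∇ℓ(β°)`, which does not depend on `y`:
`∑_i (γ'(x_{i·}ᵀ(β°+ν)) − γ'(x_{i·}ᵀβ°)) x_{i,c}`. -/
noncomputable def gradDiff {n r : ℕ} {p : Fin r → ℕ}
    (X : Fin n → ((k : Fin r) × Fin (p k)) → ℝ) (γ : ℝ → ℝ)
    (βo ν : ((k : Fin r) × Fin (p k)) → ℝ) (c : (k : Fin r) × Fin (p k)) : ℝ :=
  ∑ i, (deriv γ (dotRow X i (βo + ν)) - deriv γ (dotRow X i βo)) * X i c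

/-- Membership in the cone `C_{a,W}` where `S = {k : βo_k ≠ 0}`. -/
def InCone {r : ℕ} {p : Fin r → ℕ}
    (βo w : ((k : Fin r) × Fin (p k)) → ℝ) (a : ℝ)
    (v : ((k : Fin r) × Fin (p k)) → ℝ) : Prop :=
  ∑ k : Fin r, (if ∀ j : Fin (p k), βo ⟨k, j⟩ = 0 then groupNorm w v k else 0)
    ≤ ∑ k : Fin r, (if ∀ j : Fin (p k), βo ⟨k, j⟩ = 0 then 0 else groupNorm w v k)
      + a * ∑ c, |w c * v c|

/-- The Cone Invertibility Factor
`ζ_{a,W} = inf_{0 ≠ ν ∈ C_{a,W}} |W⁻¹(∇ℓ(β°+ν) − ∇ℓ(β°))|_∞ / |ν|_∞`. -/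
noncomputable def cif {n r : ℕ} {p : Fin r → ℕ}
    (X : Fin n → ((k : Fin r) × Fin (p k)) → ℝ) (γ : ℝ → ℝ)
    (βo w : ((k : Fin r) × Fin (p k)) → ℝ) (a : ℝ) : ℝ :=
  sInf {z : ℝ | ∃ ν : ((k : Fin r) × Fin (p k)) → ℝ, ν ≠ 0 ∧ InCone βo w a ν ∧
    z = supNorm (fun c => gradDiff X γ βo ν c / w c) / supNorm ν}


/-! ### Auxiliary lemmas -/

section AuxSup
variable {ι : Type*} [Fintype ι]

lemma abs_le_supNorm (v : ι → ℝ) (c : ι) : |v c| ≤ supNorm v :=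
  le_ciSup (f := fun c => |v c|) (Set.Finite.bddAbove (Set.finite_range _)) c

lemma supNorm_nonneg [Nonempty ι] (v : ι → ℝ) : 0 ≤ supNorm v :=
  le_trans (abs_nonneg _) (abs_le_supNorm v (Classical.arbitrary ι))

lemma supNorm_le [Nonempty ι] {v : ι → ℝ} {b : ℝ} (h : ∀ c, |v c| ≤ b) : supNorm v ≤ b :=
  ciSup_le h

lemma supNorm_pos {v : ι → ℝ} (hv : v ≠ 0) : 0 < supNorm v := by
  obtain ⟨c, hc⟩ : ∃ c, v c ≠ 0 := by
    by_contra h; push_neg at h; exact hv (funext h)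
  exact lt_of_lt_of_le (abs_pos.2 hc) (abs_le_supNorm v c)

end AuxSup

section AuxMain
variable {n r : ℕ} {p : Fin r → ℕ}

lemma groupNorm_eq_norm (w β : ((k : Fin r) × Fin (p k)) → ℝ) (k : Fin r) :
    groupNorm w β k
      = ‖(WithLp.equiv 2 (Fin (p k) → ℝ)).symm (fun j => w ⟨k, j⟩ * β ⟨k, j⟩)‖ := by
  rw [EuclideanSpace.norm_eq]
  simp only [groupNorm, WithLp.equiv_symm_apply, WithLp.ofLp_toLp, Real.norm_eq_abs, sq_abs]

lemma groupNorm_nonneg (w β : ((k : Fin r) × Fin (p k)) → ℝ) (k : Fin r) :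
    0 ≤ groupNorm w β k := Real.sqrt_nonneg _

lemma groupNorm_triangle (w β ν : ((k : Fin r) × Fin (p k)) → ℝ) (k : Fin r) :
    groupNorm w (β + ν) k ≤ groupNorm w β k + groupNorm w ν k := by
  rw [groupNorm_eq_norm, groupNorm_eq_norm, groupNorm_eq_norm]
  have h : ((WithLp.equiv 2 (Fin (p k) → ℝ)).symm (fun j => w ⟨k, j⟩ * (β + ν) ⟨k, j⟩))
      = (WithLp.equiv 2 (Fin (p k) → ℝ)).symm (fun j => w ⟨k, j⟩ * β ⟨k, j⟩)
        + (WithLp.equiv 2 (Fin (p k) → ℝ)).symm (fun j => w ⟨k, j⟩ * ν ⟨k, j⟩) := by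
    rw [WithLp.equiv_symm_apply, ← WithLp.toLp_add]
    congr 1; funext j; simp only [Pi.add_apply]; ring
  rw [h]; exact norm_add_le _ _

lemma groupNorm_sub_symm (w β ν : ((k : Fin r) × Fin (p k)) → ℝ) (k : Fin r) :
    groupNorm w (β - ν) k = groupNorm w (ν - β) k := by
  unfold groupNorm
  congr 1; apply Finset.sum_congr rfl; intro j _
  simp only [Pi.sub_apply]; ring

lemma groupNorm_congr {w β ν : ((k : Fin r) × Fin (p k)) → ℝ} {k : Fin r}
    (h : ∀ j, β ⟨k, j⟩ = ν ⟨k, j⟩) : groupNorm w β k = groupNorm w ν k := by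
  unfold groupNorm; congr 1; apply Finset.sum_congr rfl; intro j _; rw [h]

lemma groupNorm_zero_of {w β : ((k : Fin r) × Fin (p k)) → ℝ} {k : Fin r}
    (h : ∀ j, β ⟨k, j⟩ = 0) : groupNorm w β k = 0 := by
  unfold groupNorm
  rw [Finset.sum_eq_zero, Real.sqrt_zero]
  intro j _; rw [h]; ring

lemma groupNorm_sub_le (w β ν : ((k : Fin r) × Fin (p k)) → ℝ) (k : Fin r) :
    groupNorm w β k - groupNorm w ν k ≤ groupNorm w (β - ν) k := by
  have h := groupNorm_triangle w (β - ν) ν k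
  rw [sub_add_cancel] at h
  linarith

lemma groupNorm_single (w : ((k : Fin r) × Fin (p k)) → ℝ) (c : (k : Fin r) × Fin (p k)) (z : ℝ)
    (k : Fin r) :
    groupNorm w (fun c' => if c' = c then z else 0) k
      = if k = c.1 then |w c * z| else 0 := by
  obtain ⟨k0, j0⟩ := c
  by_cases hk : k = k0
  · subst hk
    simp only [if_pos rfl]
    unfold groupNorm
    rw [Finset.sum_eq_single j0]
    · simp [if_pos rfl, Real.sqrt_sq_eq_abs, abs_mul]
    · intro j _ hj
      have h' : (⟨k, j⟩ : (k : Fin r) × Fin (p k)) ≠ ⟨k, j0⟩ := by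
        intro h; apply hj; exact (Sigma.mk.inj_iff.1 h).2.eq
      simp [h']
    · intro h; exact absurd (Finset.mem_univ _) h
  · rw [if_neg hk]
    apply groupNorm_zero_of
    intro j
    have h' : (⟨k, j⟩ : (k : Fin r) × Fin (p k)) ≠ ⟨k0, j0⟩ := by
      intro h; exact hk (Sigma.mk.inj_iff.1 h).1
    simp [h']

lemma convex_deriv_ineq (γ : ℝ → ℝ) (hc : ConvexOn ℝ Set.univ γ) (hd : Differentiable ℝ γ)
    (t s : ℝ) : deriv γ t * (s - t) ≤ γ s - γ t := by
  rcases lt_trichotomy t s with h | h | h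
  · have h2 := hc.deriv_le_slope (Set.mem_univ t) (Set.mem_univ s) h (hd t)
    rw [slope_def_field] at h2
    have h' : 0 < s - t := by linarith
    have h3 := mul_le_mul_of_nonneg_right h2 h'.le
    rwa [div_mul_cancel₀] at h3
    exact h'.ne'
  · simp [h]
  · have h2 := hc.slope_le_deriv (Set.mem_univ s) (Set.mem_univ t) h (hd t)
    rw [slope_def_field] at h2
    have h' : 0 < t - s := by linarith
    have h3 := mul_le_mul_of_nonneg_right h2 h'.le
    rw [div_mul_cancel₀ _ h'.ne'] at h3
    nlinarith

/-- Value of the loss for a plain vector of responses. -/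
noncomputable def lossv (X : Fin n → ((k : Fin r) × Fin (p k)) → ℝ) (γ : ℝ → ℝ)
    (yv : Fin n → ℝ) (β : ((k : Fin r) × Fin (p k)) → ℝ) : ℝ :=
  ∑ i, (γ (dotRow X i β) - yv i * dotRow X i β)

/-- Coordinate `c` of the gradient of the loss. -/
noncomputable def gradAt (X : Fin n → ((k : Fin r) × Fin (p k)) → ℝ) (γ : ℝ → ℝ)
    (yv : Fin n → ℝ) (β : ((k : Fin r) × Fin (p k)) → ℝ) (c : (k : Fin r) × Fin (p k)) : ℝ :=
  ∑ i, (deriv γ (dotRow X i β) - yv i) * X i c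

lemma dotRow_add (X : Fin n → ((k : Fin r) × Fin (p k)) → ℝ) (i : Fin n)
    (β ν : ((k : Fin r) × Fin (p k)) → ℝ) :
    dotRow X i (β + ν) = dotRow X i β + dotRow X i ν := by
  unfold dotRow
  rw [← Finset.sum_add_distrib]
  apply Finset.sum_congr rfl; intro c _; simp only [Pi.add_apply]; ring

lemma loss_convex_lb (X : Fin n → ((k : Fin r) × Fin (p k)) → ℝ) (γ : ℝ → ℝ)
    (hc : ConvexOn ℝ Set.univ γ) (hd : Differentiable ℝ γ) (yv : Fin n → ℝ)
    (β ν : ((k : Fin r) × Fin (p k)) → ℝ) :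
    ∑ c, gradAt X γ yv β c * ν c ≤ lossv X γ yv (β + ν) - lossv X γ yv β := by
  have key : ∑ c, gradAt X γ yv β c * ν c
      = ∑ i, (deriv γ (dotRow X i β) - yv i) * dotRow X i ν := by
    unfold gradAt
    simp_rw [Finset.sum_mul]
    rw [Finset.sum_comm]
    apply Finset.sum_congr rfl; intro i _
    unfold dotRow
    rw [Finset.mul_sum]
    apply Finset.sum_congr rfl; intro c _; ring
  rw [key]
  unfold lossv
  rw [← Finset.sum_sub_distrib]
  apply Finset.sum_le_sum
  intro i _
  rw [dotRow_add]
  have h1 := convex_deriv_ineq γ hc hd (dotRow X i β) (dotRow X i β + dotRow X i ν)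
  simp only [add_sub_cancel_left] at h1
  nlinarith [h1]

lemma lossv_line_hasDerivAt (X : Fin n → ((k : Fin r) × Fin (p k)) → ℝ) (γ : ℝ → ℝ)
    (hd : Differentiable ℝ γ) (yv : Fin n → ℝ) (b u : ((k : Fin r) × Fin (p k)) → ℝ) :
    HasDerivAt (fun t : ℝ => lossv X γ yv (fun c => b c + t * u c))
      (∑ i, (deriv γ (dotRow X i b) - yv i) * dotRow X i u) 0 := by
  have hdot : ∀ i (t : ℝ), dotRow X i (fun c => b c + t * u c)
      = dotRow X i b + t * dotRow X i u := by
    intro i t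
    unfold dotRow
    rw [Finset.mul_sum, ← Finset.sum_add_distrib]
    apply Finset.sum_congr rfl; intro c _; ring
  unfold lossv
  simp_rw [hdot]
  apply HasDerivAt.fun_sum
  intro i _
  have hinner : HasDerivAt (fun t : ℝ => dotRow X i b + t * dotRow X i u) (dotRow X i u) 0 := by
    have h0 : (fun t : ℝ => dotRow X i b + t * dotRow X i u)
        = fun t : ℝ => dotRow X i b + dotRow X i u * t := by funext t; ring
    rw [h0]
    simpa using ((hasDerivAt_id (0:ℝ)).const_mul (dotRow X i u)).const_add (dotRow X i b)
  have houter : HasDerivAt γ (deriv γ (dotRow X i b)) (dotRow X i b) :=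
    (hd (dotRow X i b)).hasDerivAt
  have hcomp : HasDerivAt (fun t : ℝ => γ (dotRow X i b + t * dotRow X i u))
      (deriv γ (dotRow X i b) * dotRow X i u) 0 := by
    have h := HasDerivAt.comp (0:ℝ)
      (by simpa using houter :
        HasDerivAt γ (deriv γ (dotRow X i b))
          ((fun t : ℝ => dotRow X i b + t * dotRow X i u) 0)) hinner
    exact h
  have hlin : HasDerivAt (fun t : ℝ => yv i * (dotRow X i b + t * dotRow X i u))
      (yv i * dotRow X i u) 0 := by
    have h := hinner.const_mul (yv i)
    simpa using h
  simpa [sub_mul] using hcomp.fun_sub hlin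

lemma grad_bound (X : Fin n → ((k : Fin r) × Fin (p k)) → ℝ) (γ : ℝ → ℝ)
    (hd : Differentiable ℝ γ) (yv : Fin n → ℝ)
    (w : ((k : Fin r) × Fin (p k)) → ℝ) (hw : ∀ c, 0 < w c) (lam : ℝ) (hlam : 0 < lam)
    (b : ((k : Fin r) × Fin (p k)) → ℝ)
    (hm : ∀ β, lossv X γ yv b + lam * ∑ k, groupNorm w b k
      ≤ lossv X γ yv β + lam * ∑ k, groupNorm w β k)
    (c : (k : Fin r) × Fin (p k)) : |gradAt X γ yv b c| ≤ lam * w c := by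
  have key : ∀ s : ℝ, |s| = 1 → -(lam * w c) ≤ s * gradAt X γ yv b c := by
    intro s hs
    set u : ((k : Fin r) × Fin (p k)) → ℝ := fun c' => if c' = c then s else 0 with hu
    have hdotu : ∀ i, dotRow X i u = X i c * s := by
      intro i
      unfold dotRow
      rw [hu]
      simp_rw [mul_ite, mul_zero]
      rw [Finset.sum_ite_eq' Finset.univ c (fun c' => X i c' * s)]
      simp
    have hD : (∑ i, (deriv γ (dotRow X i b) - yv i) * dotRow X i u)
        = s * gradAt X γ yv b c := by
      unfold gradAt
      rw [Finset.mul_sum]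
      apply Finset.sum_congr rfl; intro i _
      rw [hdotu]; ring
    have hder := lossv_line_hasDerivAt X γ hd yv b u
    rw [hD] at hder
    have htend : Filter.Tendsto (slope (fun t => lossv X γ yv (fun c' => b c' + t * u c')) 0)
        (nhdsWithin 0 (Set.Ioi (0:ℝ))) (nhds (s * gradAt X γ yv b c)) :=
      (hasDerivAt_iff_tendsto_slope.1 hder).mono_left
        (nhdsWithin_mono _ (fun t ht => ne_of_gt ht))
    refine ge_of_tendsto htend ?_
    apply eventually_nhdsWithin_of_forall
    intro t ht
    have ht' : (0:ℝ) < t := ht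
    rw [slope_def_field]
    simp only [zero_mul, add_zero, sub_zero]
    rw [le_div_iff₀ ht']
    have hpen : ∑ k, groupNorm w (fun c' => b c' + t * u c') k
        ≤ ∑ k, groupNorm w b k + w c * t := by
      have htri : ∀ k, groupNorm w (fun c' => b c' + t * u c') k
          ≤ groupNorm w b k + groupNorm w (fun c' => t * u c') k := by
        intro k
        exact groupNorm_triangle w b (fun c' => t * u c') k
      have hsingle : ∑ k, groupNorm w (fun c' => t * u c') k = w c * t := by
        have hfun : (fun c' => t * u c') = fun c' => if c' = c then t * s else 0 := by
          funext c'; rw [hu]; simp [mul_ite]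
        rw [hfun]
        simp_rw [groupNorm_single w c (t * s)]
        rw [Finset.sum_ite_eq' Finset.univ c.1 (fun _ => |w c * (t * s)|)]
        simp only [Finset.mem_univ, if_true]
        rw [abs_mul, abs_mul, hs, abs_of_pos (hw c), abs_of_pos ht']
        ring
      calc ∑ k, groupNorm w (fun c' => b c' + t * u c') k
          ≤ ∑ k, (groupNorm w b k + groupNorm w (fun c' => t * u c') k) :=
            Finset.sum_le_sum (fun k _ => htri k)
        _ = ∑ k, groupNorm w b k + w c * t := by rw [Finset.sum_add_distrib, hsingle]
    have hmm := hm (fun c' => b c' + t * u c')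
    nlinarith [hmm, mul_le_mul_of_nonneg_left hpen hlam.le]
  have h1 := key 1 (by norm_num)
  have h2 := key (-1) (by norm_num)
  rw [abs_le]; constructor <;> nlinarith

/-- Deterministic part of Lemma 1. -/
lemma det_bound [Nonempty ((k : Fin r) × Fin (p k))]
    (X : Fin n → ((k : Fin r) × Fin (p k)) → ℝ) (γ : ℝ → ℝ)
    (hc : ConvexOn ℝ Set.univ γ) (hd : Differentiable ℝ γ)
    (βo w : ((k : Fin r) × Fin (p k)) → ℝ) (hw : ∀ c, 0 < w c)
    (a lam : ℝ) (ha : 0 < a) (hlam : 0 < lam)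
    (hζ : 0 < cif X γ βo w a)
    (yv : Fin n → ℝ) (b : ((k : Fin r) × Fin (p k)) → ℝ)
    (hm : ∀ β, lossv X γ yv b + lam * ∑ k, groupNorm w b k
      ≤ lossv X γ yv β + lam * ∑ k, groupNorm w β k)
    (hgA : ∀ c, |gradAt X γ yv βo c| ≤ a * lam * w c) :
    supNorm (fun c => b c - βo c) ≤ (1 + a) * lam / cif X γ βo w a := by
  set ν : ((k : Fin r) × Fin (p k)) → ℝ := fun c => b c - βo c with hν
  by_cases hν0 : ν = 0
  · rw [hν0]
    have h0 : supNorm (0 : ((k : Fin r) × Fin (p k)) → ℝ) = 0 := by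
      unfold supNorm; simp
    rw [h0]
    positivity
  · have hbν : βo + ν = b := by funext c; simp [hν]
    -- cone membership
    have hcone : InCone βo w a ν := by
      have hlb := loss_convex_lb X γ hc hd yv βo ν
      rw [hbν] at hlb
      have hub : lossv X γ yv b - lossv X γ yv βo
          ≤ lam * (∑ k, groupNorm w βo k - ∑ k, groupNorm w b k) := by
        have := hm βo
        nlinarith [this]
      have hlhs : -(a * lam * ∑ c, |w c * ν c|) ≤ ∑ c, gradAt X γ yv βo c * ν c := by
        rw [neg_le, ← Finset.sum_neg_distrib, Finset.mul_sum]
        apply Finset.sum_le_sum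
        intro c _
        have h1 : -(gradAt X γ yv βo c * ν c) ≤ |gradAt X γ yv βo c| * |ν c| := by
          rw [← abs_mul]; exact neg_le_abs _
        have h2 : |gradAt X γ yv βo c| * |ν c| ≤ a * lam * w c * |ν c| :=
          mul_le_mul_of_nonneg_right (hgA c) (abs_nonneg _)
        have h3 : |w c * ν c| = w c * |ν c| := by
          rw [abs_mul, abs_of_pos (hw c)]
        calc -(gradAt X γ yv βo c * ν c) ≤ a * lam * w c * |ν c| := le_trans h1 h2
          _ = a * lam * |w c * ν c| := by rw [h3]; ring
      have hgrp : ∑ k, (groupNorm w βo k - groupNorm w b k)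
          ≤ ∑ k, ((if ∀ j : Fin (p k), βo ⟨k, j⟩ = 0 then 0 else groupNorm w ν k)
              - (if ∀ j : Fin (p k), βo ⟨k, j⟩ = 0 then groupNorm w ν k else 0)) := by
        apply Finset.sum_le_sum
        intro k _
        by_cases hS : ∀ j : Fin (p k), βo ⟨k, j⟩ = 0
        · rw [if_pos hS, if_pos hS]
          have h1 : groupNorm w βo k = 0 := groupNorm_zero_of hS
          have h2 : groupNorm w b k = groupNorm w ν k :=
            groupNorm_congr (fun j => by simp [hν, hS j])
          rw [h1, h2]
        · rw [if_neg hS, if_neg hS]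
          have h1 : groupNorm w βo k - groupNorm w b k ≤ groupNorm w (βo - b) k :=
            groupNorm_sub_le w βo b k
          have h2 : groupNorm w (βo - b) k = groupNorm w ν k := by
            rw [groupNorm_sub_symm]
            apply groupNorm_congr
            intro j; simp [hν]
          linarith [h1, h2.le, h2.ge]
      unfold InCone
      have hchain : -(a * lam * ∑ c, |w c * ν c|)
          ≤ lam * ∑ k, ((if ∀ j : Fin (p k), βo ⟨k, j⟩ = 0 then 0 else groupNorm w ν k)
              - (if ∀ j : Fin (p k), βo ⟨k, j⟩ = 0 then groupNorm w ν k else 0)) := by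
        calc -(a * lam * ∑ c, |w c * ν c|) ≤ ∑ c, gradAt X γ yv βo c * ν c := hlhs
          _ ≤ lossv X γ yv b - lossv X γ yv βo := hlb
          _ ≤ lam * (∑ k, groupNorm w βo k - ∑ k, groupNorm w b k) := hub
          _ = lam * ∑ k, (groupNorm w βo k - groupNorm w b k) := by
              rw [Finset.sum_sub_distrib]
          _ ≤ lam * ∑ k, _ := mul_le_mul_of_nonneg_left hgrp hlam.le
      rw [Finset.sum_sub_distrib] at hchain
      have := (div_le_div_iff_of_pos_right hlam).2 hchain
      nlinarith [hchain]
    -- gradient difference bound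
    have hgd : ∀ c, |gradDiff X γ βo ν c| ≤ (1 + a) * lam * w c := by
      intro c
      have hrw : gradDiff X γ βo ν c = gradAt X γ yv b c - gradAt X γ yv βo c := by
        unfold gradDiff gradAt
        rw [← Finset.sum_sub_distrib]
        apply Finset.sum_congr rfl
        intro i _
        rw [hbν]
        ring
      rw [hrw]
      have h1 := grad_bound X γ hd yv w hw lam hlam b hm c
      have h2 := hgA c
      calc |gradAt X γ yv b c - gradAt X γ yv βo c|
          ≤ |gradAt X γ yv b c| + |gradAt X γ yv βo c| := abs_sub _ _
        _ ≤ lam * w c + a * lam * w c := add_le_add h1 h2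
        _ = (1 + a) * lam * w c := by ring
    have hsupgd : supNorm (fun c => gradDiff X γ βo ν c / w c) ≤ (1 + a) * lam := by
      apply supNorm_le
      intro c
      rw [abs_div, abs_of_pos (hw c), div_le_iff₀ (hw c)]
      exact hgd c
    -- cif bound
    have hmem : supNorm (fun c => gradDiff X γ βo ν c / w c) / supNorm ν
        ∈ {z : ℝ | ∃ ν' : ((k : Fin r) × Fin (p k)) → ℝ, ν' ≠ 0 ∧ InCone βo w a ν' ∧
          z = supNorm (fun c => gradDiff X γ βo ν' c / w c) / supNorm ν'} :=
      ⟨ν, hν0, hcone, rfl⟩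
    have hbdd : BddBelow {z : ℝ | ∃ ν' : ((k : Fin r) × Fin (p k)) → ℝ, ν' ≠ 0 ∧
        InCone βo w a ν' ∧
        z = supNorm (fun c => gradDiff X γ βo ν' c / w c) / supNorm ν'} := by
      refine ⟨0, ?_⟩
      rintro z ⟨ν', hν', hcone', rfl⟩
      exact div_nonneg (supNorm_nonneg _) (supNorm_nonneg _)
    have hcif_le : cif X γ βo w a
        ≤ supNorm (fun c => gradDiff X γ βo ν c / w c) / supNorm ν :=
      csInf_le hbdd hmem
    have hsν : 0 < supNorm ν := supNorm_pos hν0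
    rw [le_div_iff₀ hsν] at hcif_le
    rw [div_eq_inv_mul]
    show supNorm ν ≤ _
    calc supNorm ν ≤ supNorm (fun c => gradDiff X γ βo ν c / w c) / cif X γ βo w a := by
          rw [le_div_iff₀ hζ]; linarith [hcif_le]
      _ ≤ ((1 + a) * lam) / cif X γ βo w a := by
          gcongr
      _ = (cif X γ βo w a)⁻¹ * ((1 + a) * lam) := by rw [div_eq_inv_mul]

end AuxMain

section AuxProb
variable {Ω : Type*} [MeasurableSpace Ω] (P : Measure Ω) [IsProbabilityMeasure P] {n : ℕ}

lemma mgf_bound_of_sub (y : Ω → ℝ) (hy : Measurable y) (m : ℝ) (B : ℝ) (u : ℝ)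
    (hsub : ∫⁻ ω, ENNReal.ofReal (Real.exp (u * (y ω - m))) ∂P ≤ ENNReal.ofReal B)
    (hB : 0 ≤ B) :
    Integrable (fun ω => Real.exp (u * (y ω - m))) P ∧
      ∫ ω, Real.exp (u * (y ω - m)) ∂P ≤ B := by
  have hmeas : Measurable fun ω => Real.exp (u * (y ω - m)) :=
    ((hy.sub_const m).const_mul u).exp
  have hnn : 0 ≤ᵐ[P] fun ω => Real.exp (u * (y ω - m)) :=
    Filter.Eventually.of_forall fun ω => (Real.exp_pos _).le
  have hfin : HasFiniteIntegral (fun ω => Real.exp (u * (y ω - m))) P := by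
    rw [hasFiniteIntegral_iff_ofReal hnn]
    exact lt_of_le_of_lt hsub ENNReal.ofReal_lt_top
  refine ⟨⟨hmeas.aestronglyMeasurable, hfin⟩, ?_⟩
  rw [integral_eq_lintegral_of_nonneg_ae hnn hmeas.aestronglyMeasurable]
  exact ENNReal.toReal_le_of_le_ofReal hB hsub

lemma chernoff_tail (y : Fin n → Ω → ℝ) (hymeas : ∀ i, Measurable (y i))
    (hindep : iIndepFun y P)
    (σ : ℝ) (hσ : 0 < σ)
    (hsub : ∀ i, ∀ u : ℝ,
      ∫⁻ ω, ENNReal.ofReal (Real.exp (u * (y i ω - ∫ ω', y i ω' ∂P))) ∂P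
        ≤ ENNReal.ofReal (Real.exp (σ ^ 2 * u ^ 2 / 2)))
    (x : Fin n → ℝ) (s : ℝ) (hs : 0 < s) (hV : 0 < ∑ i, (x i) ^ 2) :
    P {ω | s ≤ ∑ i, x i * (y i ω - ∫ ω', y i ω' ∂P)}
      ≤ ENNReal.ofReal (Real.exp (-s ^ 2 / (2 * σ ^ 2 * ∑ i, (x i) ^ 2))) := by
  set μ : Fin n → ℝ := fun i => ∫ ω', y i ω' ∂P with hμ
  set V : ℝ := ∑ i, (x i) ^ 2 with hVdef
  set t : ℝ := s / (σ ^ 2 * V) with ht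
  have hσV : 0 < σ ^ 2 * V := by positivity
  have htpos : 0 < t := div_pos hs hσV
  set Z : Fin n → Ω → ℝ := fun i ω => x i * (y i ω - μ i) with hZ
  have hZmeas : ∀ i, Measurable (Z i) := fun i =>
    ((hymeas i).sub_const (μ i)).const_mul (x i)
  have hZindep : iIndepFun Z P := by
    apply hindep.comp (g := fun i (v : ℝ) => x i * (v - μ i))
    intro i
    exact (measurable_id.sub_const (μ i)).const_mul (x i)
  have hZint : ∀ i (u : ℝ), Integrable (fun ω => Real.exp (u * Z i ω)) P ∧
      ∫ ω, Real.exp (u * Z i ω) ∂P ≤ Real.exp (σ ^ 2 * (u * x i) ^ 2 / 2) := by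
    intro i u
    have hrw : (fun ω => Real.exp (u * Z i ω))
        = fun ω => Real.exp ((u * x i) * (y i ω - μ i)) := by
      funext ω; rw [hZ]; ring_nf
    rw [hrw]
    exact mgf_bound_of_sub P (y i) (hymeas i) (μ i) _ (u * x i) (hsub i (u * x i))
      (Real.exp_pos _).le
  have hint_sum : Integrable (fun ω => Real.exp (t * (∑ i, Z i) ω)) P :=
    hZindep.integrable_exp_mul_sum hZmeas (fun i _ => (hZint i t).1)
  have hmgf : mgf (∑ i, Z i) P t ≤ Real.exp (σ ^ 2 * t ^ 2 * V / 2) := by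
    rw [hZindep.mgf_sum hZmeas]
    calc ∏ i, mgf (Z i) P t ≤ ∏ i, Real.exp (σ ^ 2 * (t * x i) ^ 2 / 2) := by
          apply Finset.prod_le_prod (fun i _ => mgf_nonneg)
          intro i _
          exact (hZint i t).2
      _ = Real.exp (∑ i, σ ^ 2 * (t * x i) ^ 2 / 2) := by rw [Real.exp_sum]
      _ = Real.exp (σ ^ 2 * t ^ 2 * V / 2) := by
          congr 1
          rw [hVdef, Finset.mul_sum, ← Finset.sum_div]
          congr 1
          apply Finset.sum_congr rfl; intro i _; ring
  have hch := measure_ge_le_exp_mul_mgf (μ := P) (X := ∑ i, Z i) s htpos.le hint_sum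
  have hfinal : (P {ω | s ≤ (∑ i, Z i) ω}).toReal
      ≤ Real.exp (-s ^ 2 / (2 * σ ^ 2 * V)) := by
    refine hch.trans ?_
    calc Real.exp (-t * s) * mgf (∑ i, Z i) P t
        ≤ Real.exp (-t * s) * Real.exp (σ ^ 2 * t ^ 2 * V / 2) :=
          mul_le_mul_of_nonneg_left hmgf (Real.exp_pos _).le
      _ = Real.exp (-t * s + σ ^ 2 * t ^ 2 * V / 2) := by rw [← Real.exp_add]
      _ = Real.exp (-s ^ 2 / (2 * σ ^ 2 * V)) := by
          congr 1
          rw [ht]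
          field_simp
          ring
  have hset : {ω | s ≤ ∑ i, x i * (y i ω - μ i)} = {ω | s ≤ (∑ i, Z i) ω} := by
    ext ω; simp [hZ, Finset.sum_apply]
  rw [hset]
  rw [ENNReal.le_ofReal_iff_toReal_le (measure_ne_top P _) (Real.exp_pos _).le]
  exact hfinal

end AuxProb

/-- Lemma 1: for independent subgaussian responses in a GLM-type model and a Group
Lasso estimator `β̂`,
`P(|β̂ − β°|_∞ > (1+a)λ ζ_{a,W}⁻¹) ≤ 2p exp(−a²λ²/(2σ²x_W²))`. -/
theorem glamer_lemma1
    {Ω : Type*} [MeasurableSpace Ω] (P : Measure Ω) [IsProbabilityMeasure P]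
    {n r : ℕ} {p : Fin r → ℕ}
    (X : Fin n → ((k : Fin r) × Fin (p k)) → ℝ)
    (γ : ℝ → ℝ) (hγconv : ConvexOn ℝ Set.univ γ) (hγdiff : Differentiable ℝ γ)
    (y : Fin n → Ω → ℝ) (hymeas : ∀ i, Measurable (y i))
    (hindep : iIndepFun y P)
    (βo : ((k : Fin r) × Fin (p k)) → ℝ)
    (hmean : ∀ i, ∫ ω, y i ω ∂P = deriv γ (dotRow X i βo))
    (σ : ℝ) (hσ : 0 < σ)
    (hsub : ∀ i, ∀ u : ℝ,
      ∫⁻ ω, ENNReal.ofReal (Real.exp (u * (y i ω - ∫ ω', y i ω' ∂P))) ∂P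
        ≤ ENNReal.ofReal (Real.exp (σ ^ 2 * u ^ 2 / 2)))
    (w : ((k : Fin r) × Fin (p k)) → ℝ) (hw : ∀ c, 0 < w c)
    (a lam : ℝ) (ha : a ∈ Set.Ioo (0 : ℝ) 1) (hlam : 0 < lam)
    (βhat : Ω → ((k : Fin r) × Fin (p k)) → ℝ) (hβhat : Measurable βhat)
    (hmin : ∀ᵐ ω ∂P, ∀ β : ((k : Fin r) × Fin (p k)) → ℝ,
      loss X γ y ω (βhat ω) + lam * ∑ k : Fin r, groupNorm w (βhat ω) k
        ≤ loss X γ y ω β + lam * ∑ k : Fin r, groupNorm w β k)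
    (hζ : 0 < cif X γ βo w a) :
    P {ω | supNorm (fun c => βhat ω c - βo c) > (1 + a) * lam / cif X γ βo w a}
      ≤ ENNReal.ofReal
        (2 * (Fintype.card ((k : Fin r) × Fin (p k))) *
          Real.exp (-(a ^ 2 * lam ^ 2) / (2 * σ ^ 2 * (xW X w) ^ 2))) := by
  -- the index type is nonempty, else `cif = sInf ∅ = 0`
  cases isEmpty_or_nonempty ((k : Fin r) × Fin (p k)) with
  | inl hE =>
    exfalso
    have h0 : cif X γ βo w a = 0 := by
      unfold cif
      have hemp : {z : ℝ | ∃ ν : ((k : Fin r) × Fin (p k)) → ℝ, ν ≠ 0 ∧ InCone βo w a ν ∧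
          z = supNorm (fun c => gradDiff X γ βo ν c / w c) / supNorm ν} = ∅ := by
        rw [Set.eq_empty_iff_forall_notMem]
        rintro z ⟨ν, hν, -, -⟩
        exact hν (funext fun c => (hE.false c).elim)
      rw [hemp, Real.sInf_empty]
    rw [h0] at hζ
    exact lt_irrefl 0 hζ
  | inr hNE =>
  set T : Set Ω := {ω | ¬ ∀ β : ((k : Fin r) × Fin (p k)) → ℝ,
      loss X γ y ω (βhat ω) + lam * ∑ k : Fin r, groupNorm w (βhat ω) k
        ≤ loss X γ y ω β + lam * ∑ k : Fin r, groupNorm w β k} with hT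
  set U : ((k : Fin r) × Fin (p k)) → Set Ω := fun c =>
    {ω | ¬ |gradAt X γ (fun i => y i ω) βo c| ≤ a * lam * w c} with hU
  set e1 : ℝ := Real.exp (-(a ^ 2 * lam ^ 2) / (2 * σ ^ 2 * (xW X w) ^ 2)) with he1
  have he1nn : 0 ≤ e1 := (Real.exp_pos _).le
  -- inclusion of the bad event
  have hincl : {ω | supNorm (fun c => βhat ω c - βo c) > (1 + a) * lam / cif X γ βo w a}
      ⊆ T ∪ ⋃ c, U c := by
    intro ω hω
    by_cases hTm : ∀ β : ((k : Fin r) × Fin (p k)) → ℝ,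
        loss X γ y ω (βhat ω) + lam * ∑ k : Fin r, groupNorm w (βhat ω) k
          ≤ loss X γ y ω β + lam * ∑ k : Fin r, groupNorm w β k
    · right
      by_contra hUn
      simp only [Set.mem_iUnion, not_exists, hU, Set.mem_setOf_eq, not_not] at hUn
      have hdet := det_bound X γ hγconv hγdiff βo w hw a lam ha.1 hlam hζ
        (fun i => y i ω) (βhat ω) hTm hUn
      exact absurd hdet (not_le.2 hω)
    · left; exact hTm
  have hnull : P T = 0 := ae_iff.1 hmin
  -- per-coordinate bound
  have hUc : ∀ c, P (U c) ≤ ENNReal.ofReal (2 * e1) := by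
    intro c
    by_cases hV : ∑ i, (X i c) ^ 2 = 0
    · have hX0 : ∀ i, X i c = 0 := by
        intro i
        have h := (Finset.sum_eq_zero_iff_of_nonneg
          (fun i _ => sq_nonneg (X i c))).1 hV i (Finset.mem_univ i)
        exact (pow_eq_zero_iff (two_ne_zero)).1 h
      have hU0 : U c = ∅ := by
        rw [Set.eq_empty_iff_forall_notMem]
        intro ω hω
        simp only [hU, Set.mem_setOf_eq] at hω
        apply hω
        have hg0 : gradAt X γ (fun i => y i ω) βo c = 0 :=
          Finset.sum_eq_zero fun i _ => by rw [hX0 i, mul_zero]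
        rw [hg0, abs_zero]
        exact mul_nonneg (mul_nonneg ha.1.le hlam.le) (hw c).le
      rw [hU0]
      simp
    · have hVpos : 0 < ∑ i, (X i c) ^ 2 :=
        lt_of_le_of_ne (Finset.sum_nonneg fun i _ => sq_nonneg _) (Ne.symm hV)
      set s : ℝ := a * lam * w c with hsdef
      have hs : 0 < s := by have := ha.1; have := hw c; positivity
      have hgrad_eq : ∀ ω, gradAt X γ (fun i => y i ω) βo c
          = - ∑ i, X i c * (y i ω - ∫ ω', y i ω' ∂P) := by
        intro ω
        unfold gradAt
        rw [← Finset.sum_neg_distrib]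
        apply Finset.sum_congr rfl
        intro i _
        rw [← hmean i]
        ring
      have hsplit : U c ⊆ {ω | s ≤ ∑ i, X i c * (y i ω - ∫ ω', y i ω' ∂P)}
          ∪ {ω | s ≤ ∑ i, (-(X i c)) * (y i ω - ∫ ω', y i ω' ∂P)} := by
        intro ω hω
        simp only [hU, Set.mem_setOf_eq, not_le] at hω
        rw [hgrad_eq ω, abs_neg] at hω
        rcases lt_abs.1 hω with h | h
        · left; exact h.le
        · right
          simp only [Set.mem_setOf_eq]
          have hneg : ∑ i, (-(X i c)) * (y i ω - ∫ ω', y i ω' ∂P)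
              = - ∑ i, X i c * (y i ω - ∫ ω', y i ω' ∂P) := by
            rw [← Finset.sum_neg_distrib]
            apply Finset.sum_congr rfl; intro i _; ring
          rw [hneg]
          exact h.le
      have hVneg : 0 < ∑ i, (-(X i c)) ^ 2 := by simpa [neg_sq] using hVpos
      have h1 := chernoff_tail P y hymeas hindep σ hσ hsub (fun i => X i c) s hs hVpos
      have h2 := chernoff_tail P y hymeas hindep σ hσ hsub (fun i => -(X i c)) s hs hVneg
      -- exponent comparison
      have hcmp : Real.exp (-s ^ 2 / (2 * σ ^ 2 * ∑ i, (X i c) ^ 2)) ≤ e1 := by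
        rw [he1]
        apply Real.exp_le_exp.2
        set q : ℝ := Real.sqrt (∑ i, (X i c) ^ 2) / w c with hqdef
        have hq : 0 < q := div_pos (Real.sqrt_pos.2 hVpos) (hw c)
        have hxWq : q ≤ xW X w := by
          have : colNorm X c / w c ≤ xW X w :=
            le_ciSup (f := fun c => colNorm X c / w c)
              (Set.Finite.bddAbove (Set.finite_range _)) c
          exact this
        have hxW : 0 < xW X w := lt_of_lt_of_le hq hxWq
        have hVq : (∑ i, (X i c) ^ 2) = (q * w c) ^ 2 := by
          rw [hqdef, div_mul_cancel₀ _ (hw c).ne', Real.sq_sqrt hVpos.le]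
        rw [hVq, hsdef]
        rw [neg_div, neg_div, neg_le_neg_iff]
        rw [div_le_div_iff₀ (mul_pos (by positivity : (0:ℝ) < 2 * σ ^ 2) (pow_pos hxW 2))
          (mul_pos (by positivity : (0:ℝ) < 2 * σ ^ 2) (pow_pos (mul_pos hq (hw c)) 2))]
        have hq2 : q ^ 2 ≤ (xW X w) ^ 2 := pow_le_pow_left₀ hq.le hxWq 2
        nlinarith [mul_le_mul_of_nonneg_left hq2
          (show (0:ℝ) ≤ 2 * σ ^ 2 * (a ^ 2 * lam ^ 2) * (w c) ^ 2 by positivity)]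
      have hVneg_eq : (∑ i, (-(X i c)) ^ 2) = ∑ i, (X i c) ^ 2 := by simp [neg_sq]
      rw [hVneg_eq] at h2
      calc P (U c) ≤ P ({ω | s ≤ ∑ i, X i c * (y i ω - ∫ ω', y i ω' ∂P)}
              ∪ {ω | s ≤ ∑ i, (-(X i c)) * (y i ω - ∫ ω', y i ω' ∂P)}) :=
            measure_mono hsplit
        _ ≤ P {ω | s ≤ ∑ i, X i c * (y i ω - ∫ ω', y i ω' ∂P)}
              + P {ω | s ≤ ∑ i, (-(X i c)) * (y i ω - ∫ ω', y i ω' ∂P)} :=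
            measure_union_le _ _
        _ ≤ ENNReal.ofReal (Real.exp (-s ^ 2 / (2 * σ ^ 2 * ∑ i, (X i c) ^ 2)))
              + ENNReal.ofReal (Real.exp (-s ^ 2 / (2 * σ ^ 2 * ∑ i, (X i c) ^ 2))) :=
            add_le_add h1 h2
        _ = ENNReal.ofReal (Real.exp (-s ^ 2 / (2 * σ ^ 2 * ∑ i, (X i c) ^ 2))
              + Real.exp (-s ^ 2 / (2 * σ ^ 2 * ∑ i, (X i c) ^ 2))) := by
            rw [ENNReal.ofReal_add (Real.exp_pos _).le (Real.exp_pos _).le]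
        _ ≤ ENNReal.ofReal (2 * e1) := by
            apply ENNReal.ofReal_le_ofReal
            linarith [hcmp]
  -- assemble
  calc P {ω | supNorm (fun c => βhat ω c - βo c) > (1 + a) * lam / cif X γ βo w a}
      ≤ P (T ∪ ⋃ c, U c) := measure_mono hincl
    _ ≤ P T + P (⋃ c, U c) := measure_union_le _ _
    _ = P (⋃ c, U c) := by rw [hnull, zero_add]
    _ ≤ ∑' c, P (U c) := measure_iUnion_le _
    _ = ∑ c, P (U c) := tsum_fintype _
    _ ≤ ∑ _c : ((k : Fin r) × Fin (p k)), ENNReal.ofReal (2 * e1) :=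
        Finset.sum_le_sum fun c _ => hUc c
    _ = ENNReal.ofReal (2 * (Fintype.card ((k : Fin r) × Fin (p k)))
          * Real.exp (-(a ^ 2 * lam ^ 2) / (2 * σ ^ 2 * (xW X w) ^ 2))) := by
        rw [Finset.sum_const, Finset.card_univ, nsmul_eq_mul]
        rw [← ENNReal.ofReal_natCast (Fintype.card ((k : Fin r) × Fin (p k)))]
        rw [← ENNReal.ofReal_mul (by positivity)]
        rw [he1]
        congr 1
        ring
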